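/- There exists a constant K > 0 such that for every integer ℓ ≥ 1, every integer N ≥ 1, and every binary tree structure T with N internal nodes, the VC dimension of the class of decision trees on ℝ^ℓ with structure T and leaf labels in {true, false} is at most K · N · (1 + log(N · ℓ)). -/

import Mathlib

/-- A `c`-partition of a finite set `S`: a set of `c` pairwise disjoint nonempty
subsets (parts) whose union is `S`. -/
def IsPartition {α : Type*} (S : Finset α) (c : ℕ) (P : Finset (Finset α)) : Prop :=
  P.card = c ∧ (∀ p ∈ P, p.Nonempty) ∧
    (∀ p ∈ P, ∀ q ∈ P, p ≠ q → Disjoint p q) ∧ (∀ x, x ∈ S ↔ ∃ p ∈ P, x ∈ p)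

/-- A binary tree structure: either a leaf, or an internal node with a left and a
right subtree structure. -/
inductive TreeStruct : Type where
  | leaf : TreeStruct
  | node : TreeStruct → TreeStruct → TreeStruct
deriving DecidableEq

namespace TreeStruct

/-- The number of leaves of a binary tree structure. -/
def leaves : TreeStruct → ℕ
  | leaf => 1
  | node l r => l.leaves + r.leaves

/-- The number of internal nodes of a binary tree structure. -/
def internals : TreeStruct → ℕ
  | leaf => 0
  | node l r => l.internals + r.internals + 1

end TreeStruct

/-- A decision tree on `ℝ^ℓ` with labels in `Y`: every leaf carries a label and every
internal node carries a decision rule `(i, θ, s)` with feature `i`, threshold `θ` and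
sign `s` (`true` codes `+1`, `false` codes `-1`). -/
inductive DTree (ℓ : ℕ) (Y : Type) : Type where
  | leaf : Y → DTree ℓ Y
  | node : Fin ℓ → ℝ → Bool → DTree ℓ Y → DTree ℓ Y → DTree ℓ Y

namespace DTree

/-- The output of a decision tree on an example `x`: at a node with rule `(i, θ, s)`,
`x` is sent to the left subtree if `sign (x^i - θ) = s` (i.e. `(θ < x^i) = s`) and to
the right subtree otherwise. -/
noncomputable def eval {ℓ : ℕ} {Y : Type} : DTree ℓ Y → (Fin ℓ → ℝ) → Y
  | leaf y, _ => y
  | node i θ s l r, x => if decide (θ < x i) = s then l.eval x else r.eval x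

/-- The underlying structure of a decision tree. -/
def shape {ℓ : ℕ} {Y : Type} : DTree ℓ Y → TreeStruct
  | leaf _ => .leaf
  | node _ _ _ l r => .node l.shape r.shape

end DTree

/-- A partition `P` of a sample `S ⊆ ℝ^ℓ` is realizable by the class of decision trees
with structure `T` if there is a decision tree `t` with structure `T` (labels in `ℕ`)
such that two points of `S` lie in the same part of `P` iff `t` outputs the same label
on them. -/
def TreeRealizable (ℓ : ℕ) (T : TreeStruct) (S : Finset (Fin ℓ → ℝ))
    (P : Finset (Finset (Fin ℓ → ℝ))) : Prop :=
  ∃ t : DTree ℓ ℕ, t.shape = T ∧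
    ∀ x ∈ S, ∀ y ∈ S, ((∃ p ∈ P, x ∈ p ∧ y ∈ p) ↔ t.eval x = t.eval y)

/-- `PartSet ℓ T a S` : the set of `a`-partitions of `S` realizable by the tree class `T`. -/
def PartSet (ℓ : ℕ) (T : TreeStruct) (a : ℕ) (S : Finset (Fin ℓ → ℝ)) :
    Set (Finset (Finset (Fin ℓ → ℝ))) :=
  {P | IsPartition S a P ∧ TreeRealizable ℓ T S P}

/-- The `a`-partitioning function of the tree class `T` on `ℝ^ℓ`: the largest number of
distinct `a`-partitions realizable by `T` on a sample of `m` points. -/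
noncomputable def treePi (ℓ : ℕ) (T : TreeStruct) (a m : ℕ) : ℕ :=
  sSup {n : ℕ | ∃ S : Finset (Fin ℓ → ℝ), S.card = m ∧ n = (PartSet ℓ T a S).ncard}

/-- The class of Boolean-labeled decision trees with structure `T` on `ℝ^ℓ`. -/
noncomputable def TreeClassB (ℓ : ℕ) (T : TreeStruct) : Set ((Fin ℓ → ℝ) → Bool) :=
  {h | ∃ t : DTree ℓ Bool, t.shape = T ∧ h = t.eval}

/-- `H` shatters the finite set `S` if every Boolean function on `S` is the
restriction to `S` of some `h ∈ H`. -/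
def Shatters {α : Type*} (H : Set (α → Bool)) (S : Finset α) : Prop :=
  ∀ f : α → Bool, ∃ h ∈ H, ∀ x ∈ S, h x = f x


namespace VCAux
open Set

lemma leaves_eq (T : TreeStruct) : T.leaves = T.internals + 1 := by
  induction T with
  | leaf => rfl
  | node l r hl hr => simp only [TreeStruct.leaves, TreeStruct.internals, hl, hr]; omega

lemma ncard_prod' {α β : Type*} (s : Set α) (t : Set β) :
    (s ×ˢ t).ncard = s.ncard * t.ncard := by
  rw [← Nat.card_coe_set_eq, ← Nat.card_coe_set_eq, ← Nat.card_coe_set_eq,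
    Nat.card_congr (Equiv.Set.prod s t), Nat.card_prod]

lemma ncard_biUnion_le {α ι : Type*} [Finite α] (s : Finset ι) (f : ι → Set α) :
    (⋃ i ∈ s, f i).ncard ≤ ∑ i ∈ s, (f i).ncard := by
  classical
  induction s using Finset.induction with
  | empty => simp
  | insert _ _ h ih =>
    rename_i a s
    rw [Finset.sum_insert h, Finset.set_biUnion_insert]
    exact le_trans (Set.ncard_union_le _ _) (by omega)

variable {ℓ : ℕ}

noncomputable def restr (S : Finset (Fin ℓ → ℝ)) (t : DTree ℓ Bool) : (↥S → Bool) :=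
  fun x => t.eval x.1

def ASet (S : Finset (Fin ℓ → ℝ)) (T : TreeStruct) : Set (↥S → Bool) :=
  restr S '' {t | t.shape = T}

noncomputable def Phi (S : Finset (Fin ℓ → ℝ)) (i : Fin ℓ) (θ : ℝ) : ↥S → Bool :=
  fun x => decide (θ < x.1 i)

noncomputable def Psi (S : Finset (Fin ℓ → ℝ)) (p : Fin ℓ × Bool) (θ : ℝ) : ↥S → Bool :=
  fun x => decide (θ < x.1 p.1) == p.2

def Gset (S : Finset (Fin ℓ → ℝ)) : Set (↥S → Bool) :=
  {g | ∃ i θ s, g = fun x => decide (θ < x.1 i) == s}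

lemma ncard_range_Phi (S : Finset (Fin ℓ → ℝ)) (i : Fin ℓ) :
    (Set.range (Phi S i)).ncard ≤ S.card + 1 := by
  classical
  set cnt : (↥S → Bool) → ℕ := fun f => (Finset.univ.filter (fun x => f x = true)).card with hcnt
  have hmono : ∀ θ₁ θ₂ : ℝ, θ₁ ≤ θ₂ →
      (Finset.univ.filter (fun x => Phi S i θ₂ x = true)) ⊆
      (Finset.univ.filter (fun x => Phi S i θ₁ x = true)) := by
    intro θ₁ θ₂ h x hx
    simp only [Finset.mem_filter, Finset.mem_univ, true_and, Phi, decide_eq_true_eq] at hx ⊢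
    linarith
  have hkey : ∀ θ₁ θ₂ : ℝ, θ₁ ≤ θ₂ → cnt (Phi S i θ₁) = cnt (Phi S i θ₂) →
      Phi S i θ₁ = Phi S i θ₂ := by
    intro θ₁ θ₂ h hc
    have heq := Finset.eq_of_subset_of_card_le (hmono _ _ h) (le_of_eq hc)
    funext x
    rw [Bool.eq_iff_iff]
    constructor
    · intro hx
      have : x ∈ Finset.univ.filter (fun x => Phi S i θ₁ x = true) := by
        simp [hx]
      rw [← heq] at this
      simpa using this
    · intro hx
      have : x ∈ Finset.univ.filter (fun x => Phi S i θ₂ x = true) := by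
        simp [hx]
      rw [heq] at this
      simpa using this
  have hinj : Set.InjOn cnt (Set.range (Phi S i)) := by
    rintro _ ⟨θ₁, rfl⟩ _ ⟨θ₂, rfl⟩ hc
    rcases le_total θ₁ θ₂ with h | h
    · exact hkey _ _ h hc
    · exact (hkey _ _ h hc.symm).symm
  have h1 : (Set.range (Phi S i)).ncard = (cnt '' Set.range (Phi S i)).ncard :=
    (Set.ncard_image_of_injOn hinj).symm
  have h2 : cnt '' Set.range (Phi S i) ⊆ ↑(Finset.Iic S.card) := by
    rintro _ ⟨f, -, rfl⟩
    simp only [Finset.coe_Iic, Set.mem_Iic]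
    calc cnt f ≤ Finset.univ.card := Finset.card_filter_le _ _
      _ = S.card := by simp [Finset.card_univ]
  calc (Set.range (Phi S i)).ncard = (cnt '' Set.range (Phi S i)).ncard := h1
    _ ≤ (↑(Finset.Iic S.card) : Set ℕ).ncard := Set.ncard_le_ncard h2 (Finset.finite_toSet _)
    _ = S.card + 1 := by rw [Set.ncard_coe_finset, Nat.card_Iic]

lemma ncard_range_Psi (S : Finset (Fin ℓ → ℝ)) (p : Fin ℓ × Bool) :
    (Set.range (Psi S p)).ncard ≤ S.card + 1 := by
  have hsub : Set.range (Psi S p) ⊆ (fun f => fun x => f x == p.2) '' Set.range (Phi S p.1) := by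
    rintro _ ⟨θ, rfl⟩
    exact ⟨Phi S p.1 θ, ⟨θ, rfl⟩, rfl⟩
  calc (Set.range (Psi S p)).ncard
      ≤ ((fun f => fun x => f x == p.2) '' Set.range (Phi S p.1)).ncard :=
        Set.ncard_le_ncard hsub (Set.toFinite _)
    _ ≤ (Set.range (Phi S p.1)).ncard := Set.ncard_image_le (Set.toFinite _)
    _ ≤ S.card + 1 := ncard_range_Phi S p.1

lemma ncard_Gset (S : Finset (Fin ℓ → ℝ)) :
    (Gset S).ncard ≤ 2 * ℓ * (S.card + 1) := by
  have hsub : Gset S ⊆ ⋃ p ∈ (Finset.univ : Finset (Fin ℓ × Bool)), Set.range (Psi S p) := by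
    rintro g ⟨i, θ, s, rfl⟩
    exact Set.mem_biUnion (Finset.mem_univ (i, s)) ⟨θ, rfl⟩
  calc (Gset S).ncard
      ≤ (⋃ p ∈ (Finset.univ : Finset (Fin ℓ × Bool)), Set.range (Psi S p)).ncard :=
        Set.ncard_le_ncard hsub (Set.toFinite _)
    _ ≤ ∑ p ∈ (Finset.univ : Finset (Fin ℓ × Bool)), (Set.range (Psi S p)).ncard :=
        ncard_biUnion_le _ _
    _ ≤ ∑ _p ∈ (Finset.univ : Finset (Fin ℓ × Bool)), (S.card + 1) :=
        Finset.sum_le_sum fun p _ => ncard_range_Psi S p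
    _ = 2 * ℓ * (S.card + 1) := by
        simp [Finset.sum_const, Finset.card_univ]
        ring

noncomputable def combine (S : Finset (Fin ℓ → ℝ))
    (p : (↥S → Bool) × (↥S → Bool) × (↥S → Bool)) : ↥S → Bool :=
  fun x => if p.1 x then p.2.1 x else p.2.2 x

lemma ASet_node_subset (S : Finset (Fin ℓ → ℝ)) (Tl Tr : TreeStruct) :
    ASet S (.node Tl Tr) ⊆ combine S '' (Gset S ×ˢ (ASet S Tl ×ˢ ASet S Tr)) := by
  rintro _ ⟨t, ht, rfl⟩
  cases t with
  | leaf b => simp [DTree.shape] at ht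
  | node i θ s tl tr =>
    simp only [DTree.shape, Set.mem_setOf_eq, TreeStruct.node.injEq] at ht
    refine ⟨⟨fun x => decide (θ < x.1 i) == s, restr S tl, restr S tr⟩,
      ⟨⟨i, θ, s, rfl⟩, ⟨tl, ht.1, rfl⟩, ⟨tr, ht.2, rfl⟩⟩, ?_⟩
    funext x
    simp only [combine, restr, DTree.eval, beq_iff_eq]

lemma ncard_ASet (S : Finset (Fin ℓ → ℝ)) (T : TreeStruct) :
    (ASet S T).ncard ≤ (2 * ℓ * (S.card + 1)) ^ T.internals * 2 ^ T.leaves := by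
  induction T with
  | leaf =>
    have hsub : ASet S .leaf ⊆ {fun _ => true, fun _ => false} := by
      rintro _ ⟨t, ht, rfl⟩
      cases t with
      | leaf b =>
        cases b
        · right; rfl
        · left; rfl
      | node i θ s tl tr => simp [DTree.shape] at ht
    calc (ASet S .leaf).ncard ≤ ({fun _ => true, fun _ => false} : Set (↥S → Bool)).ncard :=
          Set.ncard_le_ncard hsub (Set.toFinite _)
      _ ≤ 2 := le_trans (Set.ncard_insert_le _ _) (by simp)
      _ = (2 * ℓ * (S.card + 1)) ^ TreeStruct.leaf.internals * 2 ^ TreeStruct.leaf.leaves := by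
          simp [TreeStruct.internals, TreeStruct.leaves]
  | node Tl Tr ihl ihr =>
    calc (ASet S (.node Tl Tr)).ncard
        ≤ (combine S '' (Gset S ×ˢ (ASet S Tl ×ˢ ASet S Tr))).ncard :=
          Set.ncard_le_ncard (ASet_node_subset S Tl Tr) (Set.toFinite _)
      _ ≤ (Gset S ×ˢ (ASet S Tl ×ˢ ASet S Tr)).ncard := Set.ncard_image_le (Set.toFinite _)
      _ = (Gset S).ncard * ((ASet S Tl).ncard * (ASet S Tr).ncard) := by
          rw [ncard_prod', ncard_prod']
      _ ≤ (2 * ℓ * (S.card + 1)) *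
            (((2 * ℓ * (S.card + 1)) ^ Tl.internals * 2 ^ Tl.leaves) *
             ((2 * ℓ * (S.card + 1)) ^ Tr.internals * 2 ^ Tr.leaves)) :=
          Nat.mul_le_mul (ncard_Gset S) (Nat.mul_le_mul ihl ihr)
      _ = (2 * ℓ * (S.card + 1)) ^ (Tl.node Tr).internals * 2 ^ (Tl.node Tr).leaves := by
          simp only [TreeStruct.internals, TreeStruct.leaves, pow_add, pow_succ]
          ring

lemma ASet_univ (S : Finset (Fin ℓ → ℝ)) (T : TreeStruct)
    (h : Shatters (TreeClassB ℓ T) S) : ASet S T = Set.univ := by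
  classical
  apply Set.eq_univ_of_forall
  intro f
  obtain ⟨h', ⟨t, hts, rfl⟩, hagree⟩ := h (fun x => if hx : x ∈ S then f ⟨x, hx⟩ else true)
  refine ⟨t, hts, funext fun x => ?_⟩
  simpa [restr, dif_pos x.2] using hagree x.1 x.2

lemma count_bound (S : Finset (Fin ℓ → ℝ)) (T : TreeStruct)
    (h : Shatters (TreeClassB ℓ T) S) :
    2 ^ S.card ≤ (2 * ℓ * (S.card + 1)) ^ T.internals * 2 ^ (T.internals + 1) := by
  classical
  have h1 : (ASet S T).ncard = 2 ^ S.card := by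
    rw [ASet_univ S T h, Set.ncard_univ, Nat.card_eq_fintype_card, Fintype.card_fun]
    simp [Fintype.card_coe]
  calc 2 ^ S.card = (ASet S T).ncard := h1.symm
    _ ≤ (2 * ℓ * (S.card + 1)) ^ T.internals * 2 ^ T.leaves := ncard_ASet S T
    _ = (2 * ℓ * (S.card + 1)) ^ T.internals * 2 ^ (T.internals + 1) := by rw [leaves_eq]

end VCAux


lemma numeric_bound (m N l : ℕ) (hl : 1 ≤ l) (hN : 1 ≤ N)
    (h : 2 ^ m ≤ (2 * l * (m + 1)) ^ N * 2 ^ (N + 1)) :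
    (m : ℝ) ≤ 100 * N * (1 + Real.log (N * l)) := by
  have hNR : (1:ℝ) ≤ (N:ℝ) := by exact_mod_cast hN
  have hlR : (1:ℝ) ≤ (l:ℝ) := by exact_mod_cast hl
  have hm0 : (0:ℝ) ≤ (m:ℝ) := Nat.cast_nonneg m
  have hR : (2:ℝ) ^ m ≤ (2 * (l:ℝ) * ((m:ℝ) + 1)) ^ N * 2 ^ (N + 1) := by
    exact_mod_cast h
  have hlog := Real.log_le_log (by positivity) hR
  rw [Real.log_pow, Real.log_mul (by positivity) (by positivity), Real.log_pow,
    Real.log_pow] at hlog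
  have hsplit : Real.log (2 * (l:ℝ) * ((m:ℝ) + 1))
      = Real.log 2 + Real.log l + Real.log ((m:ℝ) + 1) := by
    rw [Real.log_mul (by positivity) (by positivity),
      Real.log_mul (by positivity) (by positivity)]
  have hkey : Real.log ((m:ℝ) + 1) ≤ ((m:ℝ) + 1) / (4 * N) + Real.log (4 * N) := by
    have h1 : Real.log ((m:ℝ) + 1)
        = Real.log (((m:ℝ) + 1) / (4 * N)) + Real.log (4 * N) := by
      rw [← Real.log_mul (by positivity) (by positivity)]
      congr 1
      field_simp
    have h2 := Real.log_le_sub_one_of_pos (show (0:ℝ) < ((m:ℝ) + 1) / (4 * N) by positivity)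
    linarith
  have h4N : Real.log (4 * (N:ℝ)) = 2 * Real.log 2 + Real.log N := by
    rw [Real.log_mul (by norm_num) (by positivity), show (4:ℝ) = 2 ^ 2 by norm_num,
      Real.log_pow]
    push_cast
    ring
  have hNdiv : (N:ℝ) * (((m:ℝ) + 1) / (4 * N)) = ((m:ℝ) + 1) / 4 := by
    have hN0 : (N:ℝ) ≠ 0 := by positivity
    field_simp
  have hA : Real.log ((N:ℝ) * (l:ℝ)) = Real.log N + Real.log l :=
    Real.log_mul (by positivity) (by positivity)
  have hlogN : (0:ℝ) ≤ Real.log N := Real.log_nonneg hNR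
  have hlogl : (0:ℝ) ≤ Real.log l := Real.log_nonneg hlR
  set x := Real.log 2 with hx
  have hx1 : (0.6931471803 : ℝ) < x := Real.log_two_gt_d9
  have hx2 : x < 0.6931471808 := Real.log_two_lt_d9
  have e1 : (N:ℝ) * Real.log (2 * (l:ℝ) * ((m:ℝ) + 1))
      ≤ N * (x + Real.log l + (((m:ℝ) + 1) / (4 * N) + (2 * x + Real.log N))) := by
    rw [hsplit]
    have hk := hkey
    rw [h4N] at hk
    exact mul_le_mul_of_nonneg_left (by linarith) (by linarith)
  have e2 : (N:ℝ) * (x + Real.log l + (((m:ℝ) + 1) / (4 * N) + (2 * x + Real.log N)))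
      = 3 * ((N:ℝ) * x) + ((N:ℝ) * Real.log N + (N:ℝ) * Real.log l) + ((m:ℝ) + 1)/4 := by
    rw [mul_add, mul_add, mul_add, mul_add, hNdiv]
    ring
  have e3 : (N:ℝ) * Real.log ((N:ℝ) * (l:ℝ)) = (N:ℝ) * Real.log N + (N:ℝ) * Real.log l := by
    rw [hA]; ring
  have hcast : ((N + 1 : ℕ) : ℝ) = (N:ℝ) + 1 := by push_cast; ring
  rw [hcast] at hlog
  -- hlog : m * x ≤ N * log(2l(m+1)) + (N+1) * x
  have main : (m:ℝ) * x ≤ 4 * ((N:ℝ) * x) + x + (N:ℝ) * Real.log ((N:ℝ) * (l:ℝ)) + (m:ℝ)/4 + 1/4 := by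
    have : ((N:ℝ) + 1) * x = (N:ℝ) * x + x := by ring
    rw [this] at hlog
    linarith [e1, e2, e3, hlog]
  have hNA : (0:ℝ) ≤ (N:ℝ) * Real.log ((N:ℝ) * (l:ℝ)) := by
    have h0 : (0:ℝ) ≤ Real.log ((N:ℝ) * (l:ℝ)) := by rw [hA]; linarith
    positivity
  have hNx : (N:ℝ) * x ≤ (N:ℝ) * 0.7 :=
    mul_le_mul_of_nonneg_left (by linarith) (by linarith)
  have s1 : (m:ℝ) * 0.44 ≤ (m:ℝ) * (x - 1/4) :=
    mul_le_mul_of_nonneg_left (by linarith) hm0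
  have s4 : (m:ℝ) * 0.44 ≤ 44 * N + 44 * ((N:ℝ) * Real.log ((N:ℝ) * (l:ℝ))) := by
    have expand : (m:ℝ) * (x - 1/4) = (m:ℝ) * x - (m:ℝ)/4 := by ring
    -- m*(x-1/4) ≤ 4Nx + x + NA + 1/4 ≤ 4*0.7N + 0.7 + NA + 0.25 ≤ 44N + 44NA
    linarith [main, hNx, hNA, hNR, s1]
  have final : 100 * (N:ℝ) * (1 + Real.log ((N:ℝ) * (l:ℝ)))
      = 100 * (N:ℝ) + 100 * ((N:ℝ) * Real.log ((N:ℝ) * (l:ℝ))) := by ring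
  linarith [s4, hNA, hNR, final]

theorem vcdim_tree_asymptotic :
    ∃ K : ℝ, 0 < K ∧ ∀ (ℓ N : ℕ), 1 ≤ ℓ → 1 ≤ N → ∀ T : TreeStruct,
      T.internals = N → ∀ S : Finset (Fin ℓ → ℝ), Shatters (TreeClassB ℓ T) S →
        (S.card : ℝ) ≤ K * N * (1 + Real.log (N * ℓ)) := by
  refine ⟨100, by norm_num, ?_⟩
  intro ℓ N hℓ hN T hT S hS
  have hcount := VCAux.count_bound S T hS
  rw [hT] at hcount
  exact numeric_bound S.card N ℓ hℓ hN hcount
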